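/- Let m, N ≥ 2 and let D = D(m,N) be the diagonal grid graph. Let x : {1,…,N} → [0,1] satisfy ∑_{j=1}^N x_j = 1, and let f : A(D) → [0,1] satisfy the flow-conservation constraints: f(δ⁺(v)) − f(δ⁻(v)) equals 1 if v = (1,1), equals −x_j if v = (m,j) for some j ∈ {1,…,N}, and equals 0 otherwise. Define y_v := f(δ⁺(v)) + x_j if v = (m,j) for some j, and y_v := f(δ⁺(v)) otherwise. Then y satisfies the relaxed vertex-based path constraints: y_{(1,1)} = 1; 0 ≤ y_v ≤ 1 for all vertices v; y_u ≤ ∑_{(u,v)∈A(D)} y_v for every vertex u not of the form (m,j); and y_u ≤ ∑_{(u,v)∈A(D)} y_v + x_j for every vertex u = (m,j). -/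
import Mathlib


/-- The vertex set `{1,…,m} × {1,…,n}` of the diagonal grid graph `D(m,n)`. -/
def gridV (m n : ℕ) : Finset (ℕ × ℕ) := Finset.Icc 1 m ×ˢ Finset.Icc 1 n

/-- The arc set of the diagonal grid graph `D(m,n)`: all arcs from `(i,j)` to
`(i+1,j)`, to `(i,j+1)` and to `(i+1,j+1)` whose endpoints both lie in the
vertex set. -/
def gridA (m n : ℕ) : Finset ((ℕ × ℕ) × (ℕ × ℕ)) :=
  (gridV m n ×ˢ gridV m n).filter (fun a =>
    (a.2.1 = a.1.1 + 1 ∧ a.2.2 = a.1.2) ∨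
    (a.2.1 = a.1.1 ∧ a.2.2 = a.1.2 + 1) ∨
    (a.2.1 = a.1.1 + 1 ∧ a.2.2 = a.1.2 + 1))

lemma mem_gridA' {m n : ℕ} {a : (ℕ × ℕ) × (ℕ × ℕ)} (ha : a ∈ gridA m n) :
    a.1 ∈ gridV m n ∧ a.2 ∈ gridV m n ∧
    ((a.2.1 = a.1.1 + 1 ∧ a.2.2 = a.1.2) ∨
     (a.2.1 = a.1.1 ∧ a.2.2 = a.1.2 + 1) ∨
     (a.2.1 = a.1.1 + 1 ∧ a.2.2 = a.1.2 + 1)) := by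
  simp only [gridA, Finset.mem_filter, Finset.mem_product] at ha
  tauto

lemma mem_gridV' {m n : ℕ} {v : ℕ × ℕ} (hv : v ∈ gridV m n) :
    1 ≤ v.1 ∧ v.1 ≤ m ∧ 1 ≤ v.2 ∧ v.2 ≤ n := by
  simp only [gridV, Finset.mem_product, Finset.mem_Icc] at hv
  tauto

lemma fiber_fst (m N : ℕ) (S : Finset (ℕ × ℕ)) (f : (ℕ × ℕ) × (ℕ × ℕ) → ℝ) :
    ∑ u ∈ S, ∑ a ∈ (gridA m N).filter (fun a => a.1 = u), f a
      = ∑ a ∈ (gridA m N).filter (fun a => a.1 ∈ S), f a := by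
  simp only [Finset.sum_filter]
  rw [Finset.sum_comm]
  refine Finset.sum_congr rfl fun a _ => ?_
  exact Finset.sum_ite_eq S a.1 fun _ => f a

lemma fiber_snd (m N : ℕ) (S : Finset (ℕ × ℕ)) (f : (ℕ × ℕ) × (ℕ × ℕ) → ℝ) :
    ∑ u ∈ S, ∑ a ∈ (gridA m N).filter (fun a => a.2 = u), f a
      = ∑ a ∈ (gridA m N).filter (fun a => a.2 ∈ S), f a := by
  simp only [Finset.sum_filter]
  rw [Finset.sum_comm]
  refine Finset.sum_congr rfl fun a _ => ?_
  exact Finset.sum_ite_eq S a.2 fun _ => f a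

lemma in_le_one (m N : ℕ) (hm : 2 ≤ m)
    (x : ℕ → ℝ) (hx0 : ∀ j ∈ Finset.Icc 1 N, 0 ≤ x j)
    (f : (ℕ × ℕ) × (ℕ × ℕ) → ℝ)
    (hf0 : ∀ a ∈ gridA m N, 0 ≤ f a)
    (hflow : ∀ v ∈ gridV m N,
      (∑ a ∈ (gridA m N).filter (fun a => a.1 = v), f a) -
        (∑ a ∈ (gridA m N).filter (fun a => a.2 = v), f a) =
      if v = ((1 : ℕ), (1 : ℕ)) then 1 else if v.1 = m then -(x v.2) else 0)
    (v : ℕ × ℕ) (hv : v ∈ gridV m N) :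
    ∑ a ∈ (gridA m N).filter (fun a => a.2 = v), f a ≤ 1 := by
  set S : Finset (ℕ × ℕ) :=
    (gridV m N).filter (fun u => u.1 < v.1 ∨ (u.1 = v.1 ∧ u.2 < v.2)) with hS
  have hcons : ∑ u ∈ S, ((∑ a ∈ (gridA m N).filter (fun a => a.1 = u), f a) -
      ∑ a ∈ (gridA m N).filter (fun a => a.2 = u), f a)
      = ∑ u ∈ S, (if u = ((1 : ℕ), (1 : ℕ)) then (1:ℝ) else
          if u.1 = m then -(x u.2) else 0) :=
    Finset.sum_congr rfl fun u hu => hflow u (Finset.mem_filter.mp hu).1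
  rw [Finset.sum_sub_distrib, fiber_fst, fiber_snd] at hcons
  have harc : ∀ a ∈ gridA m N,
      a.1.1 < a.2.1 ∨ (a.1.1 = a.2.1 ∧ a.1.2 < a.2.2) := by
    intro a ha
    rcases (mem_gridA' ha).2.2 with h | h | h <;> omega
  have hsub : (gridA m N).filter (fun a => a.2 ∈ S) ⊆
      (gridA m N).filter (fun a => a.1 ∈ S) := by
    intro a ha
    rw [Finset.mem_filter] at ha ⊢
    refine ⟨ha.1, ?_⟩
    have h2 := ha.2
    rw [hS, Finset.mem_filter] at h2 ⊢
    refine ⟨(mem_gridA' ha.1).1, ?_⟩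
    have := harc a ha.1
    omega
  have hsdiff := Finset.sum_sdiff (f := f) hsub
  have hvnotS : v ∉ S := by
    rw [hS, Finset.mem_filter]
    push_neg
    intro _
    omega
  have hsub2 : (gridA m N).filter (fun a => a.2 = v) ⊆
      (gridA m N).filter (fun a => a.1 ∈ S) \ (gridA m N).filter (fun a => a.2 ∈ S) := by
    intro a ha
    rw [Finset.mem_filter] at ha
    have haA := ha.1
    have ha2 := ha.2
    rw [Finset.mem_sdiff]
    have h1S : a.1 ∈ S := by
      rw [hS, Finset.mem_filter]
      refine ⟨(mem_gridA' haA).1, ?_⟩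
      have harc' := harc a haA
      have e1 : a.2.1 = v.1 := by rw [ha2]
      have e2 : a.2.2 = v.2 := by rw [ha2]
      omega
    refine ⟨Finset.mem_filter.mpr ⟨haA, h1S⟩, fun hcon => ?_⟩
    exact hvnotS (ha2 ▸ (Finset.mem_filter.mp hcon).2)
  have hle : ∑ a ∈ (gridA m N).filter (fun a => a.2 = v), f a ≤
      ∑ a ∈ (gridA m N).filter (fun a => a.1 ∈ S) \
        (gridA m N).filter (fun a => a.2 ∈ S), f a := by
    apply Finset.sum_le_sum_of_subset_of_nonneg hsub2
    intro a ha _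
    exact hf0 a (Finset.mem_filter.mp ((Finset.sdiff_subset) ha)).1
  have hrhs : ∑ u ∈ S, (if u = ((1 : ℕ), (1 : ℕ)) then (1:ℝ) else
      if u.1 = m then -(x u.2) else 0) ≤ 1 := by
    calc ∑ u ∈ S, (if u = ((1 : ℕ), (1 : ℕ)) then (1:ℝ) else
          if u.1 = m then -(x u.2) else 0)
        ≤ ∑ u ∈ S, (if u = ((1 : ℕ), (1 : ℕ)) then (1:ℝ) else 0) := by
          apply Finset.sum_le_sum
          intro u hu
          have huV : u ∈ gridV m N := (Finset.mem_filter.mp hu).1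
          have hxu : 0 ≤ x u.2 := by
            apply hx0
            have := mem_gridV' huV
            simp only [Finset.mem_Icc]
            omega
          split_ifs <;> linarith
      _ ≤ 1 := by
          rw [Finset.sum_ite_eq' S ((1 : ℕ), (1 : ℕ)) fun _ => (1:ℝ)]
          split_ifs <;> norm_num
  linarith

theorem stmt9 (m N : ℕ) (hm : 2 ≤ m) (hN : 2 ≤ N)
    (x : ℕ → ℝ) (hx01 : ∀ j ∈ Finset.Icc 1 N, 0 ≤ x j ∧ x j ≤ 1)
    (hxsum : ∑ j ∈ Finset.Icc 1 N, x j = 1)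
    (f : (ℕ × ℕ) × (ℕ × ℕ) → ℝ)
    (hf01 : ∀ a ∈ gridA m N, 0 ≤ f a ∧ f a ≤ 1)
    (hflow : ∀ v ∈ gridV m N,
      (∑ a ∈ (gridA m N).filter (fun a => a.1 = v), f a) -
        (∑ a ∈ (gridA m N).filter (fun a => a.2 = v), f a) =
      if v = ((1 : ℕ), (1 : ℕ)) then 1 else if v.1 = m then -(x v.2) else 0)
    (y : ℕ × ℕ → ℝ)
    (hy : ∀ v ∈ gridV m N, y v =
      (∑ a ∈ (gridA m N).filter (fun a => a.1 = v), f a) +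
        (if v.1 = m then x v.2 else 0)) :
    y ((1 : ℕ), (1 : ℕ)) = 1 ∧
    (∀ v ∈ gridV m N, 0 ≤ y v ∧ y v ≤ 1) ∧
    (∀ u ∈ gridV m N, u.1 ≠ m →
      y u ≤ ∑ a ∈ (gridA m N).filter (fun a => a.1 = u), y a.2) ∧
    (∀ u ∈ gridV m N, u.1 = m →
      y u ≤ (∑ a ∈ (gridA m N).filter (fun a => a.1 = u), y a.2) + x u.2) := by
  have hx0 : ∀ j ∈ Finset.Icc 1 N, 0 ≤ x j := fun j hj => (hx01 j hj).1
  have hf0 : ∀ a ∈ gridA m N, 0 ≤ f a := fun a ha => (hf01 a ha).1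
  have hxv : ∀ v ∈ gridV m N, 0 ≤ x v.2 := by
    intro v hv
    apply hx0
    have := mem_gridV' hv
    simp only [Finset.mem_Icc]; omega
  -- nonnegativity of in/out sums
  have hout0 : ∀ v : ℕ × ℕ, 0 ≤ ∑ a ∈ (gridA m N).filter (fun a => a.1 = v), f a := by
    intro v
    apply Finset.sum_nonneg
    intro a ha
    exact hf0 a (Finset.mem_filter.mp ha).1
  have hin0 : ∀ v : ℕ × ℕ, 0 ≤ ∑ a ∈ (gridA m N).filter (fun a => a.2 = v), f a := by
    intro v
    apply Finset.sum_nonneg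
    intro a ha
    exact hf0 a (Finset.mem_filter.mp ha).1
  have h11V : ((1 : ℕ), (1 : ℕ)) ∈ gridV m N := by
    simp only [gridV, Finset.mem_product, Finset.mem_Icc]
    omega
  have hin11 : (gridA m N).filter (fun a => a.2 = ((1 : ℕ), (1 : ℕ))) = ∅ := by
    rw [Finset.filter_eq_empty_iff]
    intro a ha h2
    have h1 := mem_gridV' (mem_gridA' ha).1
    have hc := (mem_gridA' ha).2.2
    have e1 : a.2.1 = 1 := by rw [h2]
    have e2 : a.2.2 = 1 := by rw [h2]
    omega
  have hy11 : y ((1 : ℕ), (1 : ℕ)) = 1 := by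
    have hfl := hflow _ h11V
    rw [hin11, Finset.sum_empty, if_pos rfl] at hfl
    rw [hy _ h11V]
    simp only at hfl ⊢
    rw [if_neg (by omega)]
    linarith
  -- key: y v ≥ in v for every vertex, and f a ≤ y a.2 for arcs
  have hyin : ∀ v ∈ gridV m N,
      (∑ a ∈ (gridA m N).filter (fun a => a.2 = v), f a) ≤ y v := by
    intro v hv
    have hfl := hflow v hv
    rw [hy v hv]
    by_cases h1 : v = ((1 : ℕ), (1 : ℕ))
    · subst h1
      rw [if_pos rfl] at hfl
      rw [if_neg (show (((1:ℕ),(1:ℕ)) : ℕ × ℕ).1 ≠ m by simp; omega)]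
      linarith
    · rw [if_neg h1] at hfl
      by_cases h2 : v.1 = m
      · rw [if_pos h2] at hfl ⊢
        linarith
      · rw [if_neg h2] at hfl ⊢
        linarith
  have hfy : ∀ a ∈ gridA m N, f a ≤ y a.2 := by
    intro a ha
    have h2V := (mem_gridA' ha).1
    have h2V2 := (mem_gridA' ha).2.1
    have hmem : a ∈ (gridA m N).filter (fun b => b.2 = a.2) :=
      Finset.mem_filter.mpr ⟨ha, rfl⟩
    have hle : f a ≤ ∑ b ∈ (gridA m N).filter (fun b => b.2 = a.2), f b := by
      apply Finset.single_le_sum (f := f) ?_ hmem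
      intro b hb
      exact hf0 b (Finset.mem_filter.mp hb).1
    exact hle.trans (hyin a.2 h2V2)
  refine ⟨hy11, ?_, ?_, ?_⟩
  · -- bounds
    intro v hv
    constructor
    · rw [hy v hv]
      have := hout0 v
      have := hxv v hv
      split_ifs <;> linarith
    · have hfl := hflow v hv
      have hinle := in_le_one m N hm x hx0 f hf0 hflow v hv
      rw [hy v hv]
      by_cases h1 : v = ((1 : ℕ), (1 : ℕ))
      · subst h1
        rw [if_pos rfl] at hfl
        rw [hin11, Finset.sum_empty] at hfl
        rw [if_neg (show (((1:ℕ),(1:ℕ)) : ℕ × ℕ).1 ≠ m by simp; omega)]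
        linarith
      · rw [if_neg h1] at hfl
        by_cases h2 : v.1 = m
        · rw [if_pos h2] at hfl ⊢
          linarith
        · rw [if_neg h2] at hfl ⊢
          linarith
  · intro u hu hum
    rw [hy u hu, if_neg hum, add_zero]
    apply Finset.sum_le_sum
    intro a ha
    exact hfy a (Finset.mem_filter.mp ha).1
  · intro u hu hum
    rw [hy u hu, if_pos hum]
    have : ∑ a ∈ (gridA m N).filter (fun a => a.1 = u), f a ≤
        ∑ a ∈ (gridA m N).filter (fun a => a.1 = u), y a.2 := by
      apply Finset.sum_le_sum
      intro a ha
      exact hfy a (Finset.mem_filter.mp ha).1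
    linarith
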